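/- arXiv:2304.01189 — 2 statements merged into one kernel-verified Lean document; each statement's English description precedes it below -/
import Mathlib

section
/- Let k ≥ 1 and d ∈ ℕ, let P ⊆ ℝ^k be a proper d-GAP, and let I ⊆ ℝ^k be a nonempty bounded convex set. Then for every x₀ ∈ ℝ^k, #{p ∈ P : x₀ − p ∈ I} · |P+I| ≤ 2^{k+d} · #P · |I|. -/
open Set Pointwise MeasureTheory ENNReal

/-- `P ⊆ ℝ^k` is a `d`-dimensional generalized arithmetic progression:
`P = {∑ i, λ i • a i : 1 ≤ λ i ≤ ℓ i}`. -/
def IsGAPR (k d : ℕ) (P : Set (Fin k → ℝ)) : Prop :=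
  ∃ (a : Fin d → (Fin k → ℝ)) (l : Fin d → ℕ), (∀ i, 1 ≤ l i) ∧
    P = (fun lam : Fin d → ℕ => ∑ i, (lam i : ℝ) • a i) ''
          {lam | ∀ i, 1 ≤ lam i ∧ lam i ≤ l i}

/-- `P ⊆ ℝ^k` is a proper `d`-GAP: the parametrisation is injective. -/
def IsProperGAPR (k d : ℕ) (P : Set (Fin k → ℝ)) : Prop :=
  ∃ (a : Fin d → (Fin k → ℝ)) (l : Fin d → ℕ), (∀ i, 1 ≤ l i) ∧
    P = (fun lam : Fin d → ℕ => ∑ i, (lam i : ℝ) • a i) ''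
          {lam | ∀ i, 1 ≤ lam i ∧ lam i ≤ l i} ∧
    Set.InjOn (fun lam : Fin d → ℕ => ∑ i, (lam i : ℝ) • a i)
      {lam | ∀ i, 1 ≤ lam i ∧ lam i ≤ l i}

/-- A parallelotope in `ℝ^k`: `{x₀ + ∑ i, λ i • v i : λ i ∈ [0,1]}`. -/
def IsParallelotope (k : ℕ) (Q : Set (Fin k → ℝ)) : Prop :=
  ∃ (x₀ : Fin k → ℝ) (v : Fin k → (Fin k → ℝ)),
    Q = (fun lam : Fin k → ℝ => x₀ + ∑ i, lam i • v i) '' (Set.Icc 0 1)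

theorem stmt_10 (k d : ℕ) (hk : 1 ≤ k) (P : Set (Fin k → ℝ)) (hP : IsProperGAPR k d P)
    (I : Set (Fin k → ℝ)) (hIne : I.Nonempty) (hIb : Bornology.IsBounded I)
    (hIc : Convex ℝ I) (x₀ : Fin k → ℝ) :
    ({p ∈ P | x₀ - p ∈ I}.ncard : ℝ≥0∞) * volume (P + I) ≤
      2 ^ (k + d) * (P.ncard : ℝ≥0∞) * volume I := by
  classical
  obtain ⟨a, l, hl, hPeq, hinj⟩ := hP
  set f : (Fin d → ℕ) → (Fin k → ℝ) := fun lam => ∑ i, (lam i : ℝ) • a i with hfdef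
  set L : Set (Fin d → ℕ) := {lam | ∀ i, 1 ≤ lam i ∧ lam i ≤ l i} with hLdef
  have hLIcc : L = Set.Icc 1 l := by
    ext lam
    simp [hLdef, Set.mem_Icc, Pi.le_def, forall_and]
  set S : Set (Fin k → ℝ) := {p ∈ P | x₀ - p ∈ I} with hSdef
  have hLfin : L.Finite := by rw [hLIcc]; exact Set.finite_Icc _ _
  have hPfin : P.Finite := by rw [hPeq]; exact hLfin.image f
  have hSfin : S.Finite := hPfin.subset (Set.sep_subset _ _)
  have hPSfin : (P + S).Finite := hPfin.add hSfin
  -- cardinality of P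
  have hPcard : P.ncard = ∏ i, l i := by
    rw [hPeq, Set.ncard_image_of_injOn hinj, hLIcc, ← Finset.coe_Icc,
      Set.ncard_coe_finset, Pi.card_Icc]
    simp [Nat.card_Icc]
  -- additivity of f
  have hfadd : ∀ lam mu : Fin d → ℕ, f (lam + mu) = f lam + f mu := by
    intro lam mu
    simp [hfdef, Pi.add_apply, Nat.cast_add, add_smul, Finset.sum_add_distrib]
  -- sumset bound
  have hPPsub : P + S ⊆ f '' Set.Icc 2 (l + l) := by
    rintro z ⟨p, hp, q, hq, rfl⟩
    rw [hPeq] at hp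
    obtain ⟨lam, hlam, rfl⟩ := hp
    have hq' : q ∈ P := hq.1
    rw [hPeq] at hq'
    obtain ⟨mu, hmu, rfl⟩ := hq'
    rw [hLIcc, Set.mem_Icc] at hlam hmu
    refine ⟨lam + mu, Set.mem_Icc.2 ⟨?_, add_le_add hlam.2 hmu.2⟩, ?_⟩
    · have : (2 : Fin d → ℕ) = 1 + 1 := by ext i; rfl
      rw [this]
      exact add_le_add hlam.1 hmu.1
    · show f (lam + mu) = f lam + f mu
      exact hfadd lam mu
  have hFcard : (P + S).ncard ≤ 2 ^ d * P.ncard := by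
    calc (P + S).ncard ≤ (f '' Set.Icc 2 (l + l)).ncard :=
          Set.ncard_le_ncard hPPsub ((Set.finite_Icc _ _).image f)
      _ ≤ (Set.Icc (2 : Fin d → ℕ) (l + l)).ncard := Set.ncard_image_le (Set.finite_Icc _ _)
      _ ≤ 2 ^ d * P.ncard := by
          rw [← Finset.coe_Icc, Set.ncard_coe_finset, Pi.card_Icc, hPcard]
          calc (∏ i, (Finset.Icc ((2 : Fin d → ℕ) i) ((l + l) i)).card)
              ≤ ∏ i, 2 * l i := by
                refine Finset.prod_le_prod' fun i _ => ?_
                have h2 : (2 : Fin d → ℕ) i = 2 := rfl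
                simp only [Nat.card_Icc, Pi.add_apply, h2]
                omega
            _ = 2 ^ d * ∏ i, l i := by
                rw [Finset.prod_mul_distrib, Finset.prod_const, Finset.card_univ,
                  Fintype.card_fin]
  -- convexity: I + I = 2 • I
  have hI2 : (2 : ℝ) • I = I + I := by
    rw [show (2 : ℝ) = 1 + 1 by norm_num, hIc.add_smul zero_le_one zero_le_one, one_smul]
  -- the covering sets
  set C : (Fin k → ℝ) → Set (Fin k → ℝ) := fun r => (r - x₀) +ᵥ ((2 : ℝ) • I) with hCdef
  have hCconv : ∀ r, Convex ℝ (C r) := fun r => (hIc.smul 2).vadd _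
  have hCnull : ∀ r, NullMeasurableSet (C r) volume := fun r => (hCconv r).nullMeasurableSet (μ := volume)
  have hCvol : ∀ r, volume (C r) = 2 ^ k * volume I := by
    intro r
    simp only [hCdef]
    rw [measure_vadd, Measure.addHaar_smul, Module.finrank_fin_fun]
    congr 1
    rw [abs_of_nonneg (by positivity)]
    rw [ENNReal.ofReal_pow zero_le_two, ENNReal.ofReal_ofNat]
  -- null measurability of P + I
  have hPInull : NullMeasurableSet (P + I) volume := by
    have : P + I = ⋃ p ∈ P, (p +ᵥ I) := by
      ext z
      simp [Set.mem_add, Set.mem_vadd_set, eq_comm]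
    rw [this]
    exact NullMeasurableSet.biUnion hPfin.countable fun p _ => (hIc.vadd p).nullMeasurableSet (μ := volume)
  set F : Finset (Fin k → ℝ) := hPSfin.toFinset with hFdef
  set T : Finset (Fin k → ℝ) := hSfin.toFinset with hTdef
  -- multiplicity bound
  have hmul : ∀ z ∈ P + I, (S.ncard : ℝ≥0∞) ≤ ∑ r ∈ F, (C r).indicator 1 z := by
    rintro z ⟨q, hq, y, hy, rfl⟩
    have key : ∀ p ∈ T, q + y ∈ C (q + p) := by
      intro p hp
      rw [hTdef, Set.Finite.mem_toFinset] at hp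
      refine ⟨y + (x₀ - p), ?_, by simp only [vadd_eq_add]; abel⟩
      rw [hI2]
      exact ⟨y, hy, x₀ - p, hp.2, rfl⟩
    calc (S.ncard : ℝ≥0∞) = ∑ _p ∈ T, 1 := by
          rw [Finset.sum_const, Set.ncard_eq_toFinset_card _ hSfin, ← hTdef]
          simp
      _ = ∑ p ∈ T, (C (q + p)).indicator (1 : (Fin k → ℝ) → ℝ≥0∞) (q + y) := by
          refine Finset.sum_congr rfl fun p hp => ?_
          rw [Set.indicator_of_mem (key p hp)]
          rfl
      _ = ∑ r ∈ T.image (q + ·), (C r).indicator (1 : (Fin k → ℝ) → ℝ≥0∞) (q + y) := by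
          rw [Finset.sum_image fun p _ p' _ h => add_left_cancel h]
      _ ≤ ∑ r ∈ F, (C r).indicator 1 (q + y) := by
          refine Finset.sum_le_sum_of_subset fun r hr => ?_
          obtain ⟨p, hp, rfl⟩ := Finset.mem_image.1 hr
          rw [hTdef, Set.Finite.mem_toFinset] at hp
          rw [hFdef, Set.Finite.mem_toFinset]
          exact ⟨q, hq, p, hp, rfl⟩
  -- the main integration step
  have main : (S.ncard : ℝ≥0∞) * volume (P + I) ≤ ∑ r ∈ F, volume (C r) := by
    calc (S.ncard : ℝ≥0∞) * volume (P + I)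
        = ∫⁻ z, (P + I).indicator (fun _ => (S.ncard : ℝ≥0∞)) z :=
          (lintegral_indicator_const₀ hPInull _).symm
      _ ≤ ∫⁻ z, ∑ r ∈ F, (C r).indicator 1 z := by
          refine lintegral_mono fun z => ?_
          by_cases hz : z ∈ P + I
          · rw [Set.indicator_of_mem hz]; exact hmul z hz
          · rw [Set.indicator_of_notMem hz]; exact zero_le
      _ = ∑ r ∈ F, ∫⁻ z, (C r).indicator 1 z :=
          lintegral_finset_sum' F fun r _ => aemeasurable_const.indicator₀ (hCnull r)
      _ = ∑ r ∈ F, volume (C r) := by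
          refine Finset.sum_congr rfl fun r _ => ?_
          exact lintegral_indicator_const₀ (hCnull r) 1 |>.trans (one_mul _)
  have hFc : F.card = (P + S).ncard := (Set.ncard_eq_toFinset_card _ hPSfin).symm
  calc (S.ncard : ℝ≥0∞) * volume (P + I)
      ≤ ∑ r ∈ F, volume (C r) := main
    _ = ((P + S).ncard : ℝ≥0∞) * (2 ^ k * volume I) := by
        rw [Finset.sum_congr rfl fun r _ => hCvol r, Finset.sum_const, hFc, nsmul_eq_mul]
    _ ≤ ((2 ^ d * P.ncard : ℕ) : ℝ≥0∞) * (2 ^ k * volume I) := by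
        have : ((P + S).ncard : ℝ≥0∞) ≤ ((2 ^ d * P.ncard : ℕ) : ℝ≥0∞) := by
          exact_mod_cast hFcard
        exact mul_le_mul_left this _
    _ = 2 ^ (k + d) * (P.ncard : ℝ≥0∞) * volume I := by
        push_cast
        rw [pow_add]
        ring
end

section
/- Let X, Y ⊆ ℝ be nonempty bounded measurable sets with |co(Y)| ≥ |co(X)|. Then: (i) |X+Y| ≥ 2|X|; (ii) |X+Y| ≥ |X| + |co(Y)| + min{0, |X| − |co(Y) \ Y|}; and (iii) |X+Y| ≥ |co(X)| + |Y| + min{0, |X| − |co(Y) \ Y|}. -/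
open Set Pointwise MeasureTheory
open scoped ENNReal NNReal

noncomputable section Stmt17Aux

/-- wrap of a set `E ⊆ [0,∞)` modulo `P` into `[0,P)`. -/
def wr17 (P : ℝ) (E : Set ℝ) : Set ℝ := ⋃ k : ℕ, {x | x + k * P ∈ E} ∩ Ico 0 P

lemma wr17_subset (P : ℝ) (E : Set ℝ) : wr17 P E ⊆ Ico 0 P := by
  intro x hx; rcases mem_iUnion.mp hx with ⟨k, hk⟩; exact hk.2

lemma wr17_meas {P : ℝ} {E : Set ℝ} (hE : MeasurableSet E) : MeasurableSet (wr17 P E) :=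
  MeasurableSet.iUnion fun _ =>
    (hE.preimage (measurable_add_const _)).inter measurableSet_Ico

lemma wr17_mono {P : ℝ} {E F : Set ℝ} (h : E ⊆ F) : wr17 P E ⊆ wr17 P F := by
  intro x hx; rcases mem_iUnion.mp hx with ⟨k, hk⟩
  exact mem_iUnion.mpr ⟨k, ⟨h hk.1, hk.2⟩⟩

lemma mem_wr17 {P : ℝ} {E : Set ℝ} {x : ℝ} :
    x ∈ wr17 P E ↔ (∃ k : ℕ, x + k * P ∈ E) ∧ x ∈ Ico 0 P := by
  simp only [wr17, mem_iUnion, mem_inter_iff, mem_setOf_eq]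
  exact ⟨fun ⟨k, h1, h2⟩ => ⟨⟨k, h1⟩, h2⟩, fun ⟨⟨k, h1⟩, h2⟩ => ⟨k, h1, h2⟩⟩

lemma Icodisj {P : ℝ} (hP : 0 < P) {i j : ℕ} (hij : i ≠ j) :
    Disjoint (Ico ((i:ℝ) * P) ((i:ℝ) * P + P)) (Ico ((j:ℝ) * P) ((j:ℝ) * P + P)) := by
  rw [Set.Ico_disjoint_Ico]
  rcases lt_or_gt_of_ne hij with hlt | hlt
  · have : (i:ℝ) + 1 ≤ (j:ℝ) := by exact_mod_cast Nat.succ_le_of_lt hlt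
    refine le_trans (min_le_left _ _) (le_trans ?_ (le_max_right _ _)); nlinarith
  · have : (j:ℝ) + 1 ≤ (i:ℝ) := by exact_mod_cast Nat.succ_le_of_lt hlt
    refine le_trans (min_le_right _ _) (le_trans ?_ (le_max_left _ _)); nlinarith

/-- partition of the volume of `S ⊆ [0, N·P)` into slices. -/
lemma part17 {P : ℝ} (hP : 0 < P) (N : ℕ) {S : Set ℝ} (hSm : MeasurableSet S)
    (hS : S ⊆ Ico 0 (N * P)) :
    volume S = ∑ k ∈ Finset.range N, volume ({x | x + k * P ∈ S} ∩ Ico 0 P) := by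
  have hslice : ∀ k : ℕ, {x | x + k * P ∈ S} ∩ Ico 0 P
      = (fun x => x + k * P) ⁻¹' (S ∩ Ico (k * P) (k * P + P)) := by
    intro k; ext x
    simp only [mem_inter_iff, mem_setOf_eq, mem_Ico, mem_preimage]
    constructor
    · rintro ⟨h1, h2, h3⟩; exact ⟨h1, by linarith, by linarith⟩
    · rintro ⟨h1, h2, h3⟩; exact ⟨h1, by linarith, by linarith⟩
  have hvol : ∀ k : ℕ, volume ({x | x + k * P ∈ S} ∩ Ico 0 P)
      = volume (S ∩ Ico (k * P) (k * P + P)) := by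
    intro k; rw [hslice k, measure_preimage_add_right]
  rw [Finset.sum_congr rfl (fun k _ => hvol k), ← measure_biUnion_finset]
  · congr 1
    apply Subset.antisymm
    · intro x hx
      have hx0 : 0 ≤ x := (hS hx).1
      have hxN : x < N * P := (hS hx).2
      set k := ⌊x / P⌋₊ with hkdef
      have hx1 : (k:ℝ) ≤ x / P := Nat.floor_le (by positivity)
      have hx2 : x / P < (k:ℝ) + 1 := Nat.lt_floor_add_one _
      have hkP : (k:ℝ) * P ≤ x := by
        have := mul_le_mul_of_nonneg_right hx1 hP.le
        rwa [div_mul_cancel₀ _ hP.ne'] at this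
      have hkP2 : x < (k:ℝ) * P + P := by
        have := mul_lt_mul_of_pos_right hx2 hP
        rw [div_mul_cancel₀ _ hP.ne'] at this; linarith
      have hkN : k < N := by
        by_contra hcon
        push_neg at hcon
        have : (N:ℝ) * P ≤ (k:ℝ) * P := by
          apply mul_le_mul_of_nonneg_right _ hP.le; exact_mod_cast hcon
        linarith
      exact mem_biUnion (Finset.mem_range.mpr hkN) ⟨hx, hkP, hkP2⟩
    · exact iUnion₂_subset fun k _ => inter_subset_left
  · intro i hi j hj hij
    exact Disjoint.mono inter_subset_right inter_subset_right (Icodisj hP hij)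
  · exact fun k _ => hSm.inter measurableSet_Ico

/-- general union/pairs inequality -/
lemma gen17 (F : ℕ → Set ℝ) (hm : ∀ k, MeasurableSet (F k)) (N : ℕ) :
    volume (⋃ k ∈ Finset.range (N + 1), F k)
      + ∑ k ∈ Finset.range N, volume (F k ∩ F (k + 1))
    ≤ ∑ k ∈ Finset.range (N + 1), volume (F k) := by
  induction N with
  | zero => simp
  | succ N ih =>
      have hsub : (⋃ k ∈ Finset.range (N + 2), F k)
          ⊆ (⋃ k ∈ Finset.range (N + 1), F k) ∪ (F (N + 1) \ F N) := by
        intro x hx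
        rcases mem_iUnion₂.mp hx with ⟨k, hk, hxk⟩
        rcases Finset.mem_range_succ_iff.mp hk |>.lt_or_eq with hlt | heq
        · exact Or.inl (mem_biUnion (Finset.mem_range.mpr hlt) hxk)
        · by_cases hxN : x ∈ F N
          · exact Or.inl (mem_biUnion (Finset.self_mem_range_succ N) hxN)
          · exact Or.inr ⟨heq ▸ hxk, hxN⟩
      have h1 : volume (⋃ k ∈ Finset.range (N + 2), F k)
          ≤ volume (⋃ k ∈ Finset.range (N + 1), F k) + volume (F (N + 1) \ F N) :=
        le_trans (measure_mono hsub) (measure_union_le _ _)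
      have h2 : volume (F (N + 1) \ F N) + volume (F (N + 1) ∩ F N) = volume (F (N + 1)) := by
        rw [add_comm]; exact measure_inter_add_diff _ (hm N)
      rw [Finset.sum_range_succ (fun k => volume (F k ∩ F (k + 1))) N,
        Finset.sum_range_succ (fun k => volume (F k)) (N + 1)]
      calc volume (⋃ k ∈ Finset.range (N + 2), F k)
            + (∑ k ∈ Finset.range N, volume (F k ∩ F (k + 1)) + volume (F N ∩ F (N + 1)))
          ≤ (volume (⋃ k ∈ Finset.range (N + 1), F k) + volume (F (N + 1) \ F N))
            + (∑ k ∈ Finset.range N, volume (F k ∩ F (k + 1)) + volume (F N ∩ F (N + 1))) := by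
            exact add_le_add_left h1 _
        _ = (volume (⋃ k ∈ Finset.range (N + 1), F k)
            + ∑ k ∈ Finset.range N, volume (F k ∩ F (k + 1)))
            + (volume (F (N + 1) \ F N) + volume (F (N + 1) ∩ F N)) := by
            rw [inter_comm (F N)]; ring
        _ ≤ ∑ k ∈ Finset.range (N + 1), volume (F k) + volume (F (N + 1)) := by
            rw [h2]; exact add_le_add_left ih _

/-- overlap lemma -/
lemma ovl17 {P : ℝ} (hP : 0 < P) (N : ℕ) {E : Set ℝ} (hEm : MeasurableSet E)
    (hE : E ⊆ Ico 0 ((N + 1) * P)) :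
    volume (wr17 P E) + volume (E ∩ (fun x => x + P) ⁻¹' E) ≤ volume E := by
  set F : ℕ → Set ℝ := fun k => {x | x + k * P ∈ E} ∩ Ico 0 P with hF
  have hFm : ∀ k, MeasurableSet (F k) := fun k =>
    (hEm.preimage (measurable_add_const _)).inter measurableSet_Ico
  have hwr : wr17 P E = ⋃ k ∈ Finset.range (N + 1), F k := by
    apply Subset.antisymm
    · intro x hx
      rcases mem_wr17.mp hx with ⟨⟨k, hk⟩, hx0⟩
      have hkN : k < N + 1 := by
        by_contra hcon
        push_neg at hcon
        have h1 : ((N:ℝ) + 1) * P ≤ (k:ℝ) * P := by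
          apply mul_le_mul_of_nonneg_right _ hP.le; exact_mod_cast hcon
        have := (hE hk).2
        have : x + k * P < ((N:ℝ) + 1) * P := by exact_mod_cast this
        have hx00 : (0:ℝ) ≤ x := hx0.1
        linarith
      exact mem_biUnion (Finset.mem_range.mpr hkN) ⟨hk, hx0⟩
    · intro x hx
      rcases mem_iUnion₂.mp hx with ⟨k, _, hxk⟩
      exact mem_wr17.mpr ⟨⟨k, hxk.1⟩, hxk.2⟩
  have hO : E ∩ (fun x => x + P) ⁻¹' E ⊆ Ico 0 ((N+1) * P) := fun x hx => hE hx.1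
  have hOm : MeasurableSet (E ∩ (fun x => x + P) ⁻¹' E) :=
    hEm.inter (hEm.preimage (measurable_add_const _))
  have hEeq := part17 hP (N + 1) hEm (by exact_mod_cast hE)
  have hOeq := part17 hP (N + 1) hOm (by exact_mod_cast hO)
  have hOslice : ∀ k : ℕ, {x | x + k * P ∈ E ∩ (fun x => x + P) ⁻¹' E} ∩ Ico 0 P
      = F k ∩ F (k + 1) := by
    intro k; ext x
    simp only [hF, mem_inter_iff, mem_setOf_eq, mem_preimage, mem_Ico]
    constructor
    · rintro ⟨⟨h1, h2⟩, h3⟩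
      refine ⟨⟨h1, h3⟩, ?_, h3⟩
      have : x + ↑(k+1) * P = x + ↑k * P + P := by push_cast; ring
      rw [this]; exact h2
    · rintro ⟨⟨h1, h3⟩, h2, _⟩
      refine ⟨⟨h1, ?_⟩, h3⟩
      have : x + ↑(k+1) * P = x + ↑k * P + P := by push_cast; ring
      rw [← this]; exact h2
  have hlast : F (N + 1) = ∅ := by
    apply eq_empty_of_forall_notMem
    intro x hx
    have h1 := hE hx.1
    have h2 : (0:ℝ) ≤ x := hx.2.1
    have h3 := h1.2
    push_cast at h3
    nlinarith
  have hOeq2 : volume (E ∩ (fun x => x + P) ⁻¹' E)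
      = ∑ k ∈ Finset.range N, volume (F k ∩ F (k + 1)) := by
    rw [hOeq, Finset.sum_congr rfl (fun k _ => by rw [hOslice k]),
      Finset.sum_range_succ, hlast]
    simp
  rw [hwr, hOeq2, hEeq]
  have := gen17 F hFm N
  calc volume (⋃ k ∈ Finset.range (N + 1), F k)
        + ∑ k ∈ Finset.range N, volume (F k ∩ F (k + 1))
      ≤ ∑ k ∈ Finset.range (N + 1), volume (F k) := this
  _ = ∑ k ∈ Finset.range (N + 1), volume ({x | x + ↑k * P ∈ E} ∩ Ico 0 P) := rfl








lemma claim17 {P : ℝ} (hP : 0 < P) {A B : Set ℝ} (hA : A.Nonempty) (hB : B.Nonempty)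
    (hAs : A ⊆ Icc 0 P) (hBs : B ⊆ Icc 0 P) (p : ℕ) (hp : p.Prime) :
    min (ENNReal.ofReal P) (volume A + volume B)
      ≤ volume (wr17 P (Metric.cthickening (2 * (P / p)) (A + B))) + ENNReal.ofReal (P / p) := by
  classical
  haveI : NeZero p := ⟨hp.ne_zero⟩
  have hppos : (0:ℝ) < p := by exact_mod_cast hp.pos
  set h := P / p with hhdef
  have hh : 0 < h := div_pos hP hppos
  have hph : (p : ℝ) * h = P := by rw [hhdef]; field_simp [hppos.ne']
  set cell : ℕ → Set ℝ := fun n => Icc ((n:ℝ) * h) ((n:ℝ) * h + h) with hcell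
  -- covering
  have hcover : ∀ (S : Set ℝ), S ⊆ Icc 0 P → ∀ x ∈ S, ∃ i : ZMod p, x ∈ cell i.val := by
    intro S hS x hx
    obtain ⟨hx0, hxP⟩ := hS hx
    by_cases hc : ⌊x / h⌋₊ < p
    · refine ⟨(⌊x / h⌋₊ : ZMod p), ?_⟩
      rw [ZMod.val_natCast_of_lt hc]
      have hx1 : (⌊x / h⌋₊:ℝ) ≤ x / h := Nat.floor_le (by positivity)
      have hx2 : x / h < (⌊x / h⌋₊:ℝ) + 1 := Nat.lt_floor_add_one _
      constructor
      · have := mul_le_mul_of_nonneg_right hx1 hh.le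
        rwa [div_mul_cancel₀ _ hh.ne'] at this
      · have := mul_le_mul_of_nonneg_right hx2.le hh.le
        rw [div_mul_cancel₀ _ hh.ne'] at this; linarith
    · push_neg at hc
      have hxge : (p:ℝ) ≤ x / h := by
        have := Nat.le_floor_iff (α := ℝ) (by positivity : (0:ℝ) ≤ x / h) |>.mp hc
        exact_mod_cast this
      have hxP' : P ≤ x := by
        have := mul_le_mul_of_nonneg_right hxge hh.le
        rw [div_mul_cancel₀ _ hh.ne'] at this; linarith [hph]
      have hxeq : x = P := le_antisymm hxP hxP'
      refine ⟨((p - 1 : ℕ) : ZMod p), ?_⟩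
      rw [ZMod.val_natCast_of_lt (Nat.sub_lt hp.pos one_pos)]
      have hcast : ((p - 1 : ℕ) : ℝ) = (p:ℝ) - 1 := by
        have := hp.one_lt
        push_cast [Nat.cast_sub (le_of_lt this)]; ring
      rw [hxeq, hcell]
      constructor
      · simp only [hcast]; nlinarith
      · simp only [hcast]; nlinarith
  have hvolcell : ∀ n : ℕ, volume (cell n) = ENNReal.ofReal h := by
    intro n; rw [hcell]; simp only [Real.volume_Icc]; ring_nf
  -- discretization
  set Abar : Finset (ZMod p) :=
    Finset.univ.filter (fun i : ZMod p => (A ∩ cell i.val).Nonempty) with hAbar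
  set Bbar : Finset (ZMod p) :=
    Finset.univ.filter (fun i : ZMod p => (B ∩ cell i.val).Nonempty) with hBbar
  have hvolbound : ∀ (S : Set ℝ), S ⊆ Icc 0 P →
      volume S ≤ (Finset.univ.filter
        (fun i : ZMod p => (S ∩ cell i.val).Nonempty)).card * ENNReal.ofReal h := by
    intro S hS
    set Sbar := Finset.univ.filter (fun i : ZMod p => (S ∩ cell i.val).Nonempty) with hSbar
    have hsub : S ⊆ ⋃ i ∈ Sbar, cell i.val := by
      intro x hx
      obtain ⟨i, hi⟩ := hcover S hS x hx
      have him : i ∈ Sbar := by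
        rw [hSbar]
        exact Finset.mem_filter.mpr ⟨Finset.mem_univ _, ⟨x, hx, hi⟩⟩
      exact mem_biUnion him hi
    calc volume S ≤ volume (⋃ i ∈ Sbar, cell i.val) := measure_mono hsub
      _ ≤ ∑ i ∈ Sbar, volume (cell i.val) := measure_biUnion_finset_le _ _
      _ = Sbar.card * ENNReal.ofReal h := by
          rw [Finset.sum_congr rfl (fun i _ => hvolcell i.val), Finset.sum_const,
            nsmul_eq_mul]
  have hAvol : volume A ≤ Abar.card * ENNReal.ofReal h := hvolbound A hAs
  have hBvol : volume B ≤ Bbar.card * ENNReal.ofReal h := hvolbound B hBs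
  have hAne : Abar.Nonempty := by
    obtain ⟨x, hx⟩ := hA
    obtain ⟨i, hi⟩ := hcover A hAs x hx
    exact ⟨i, Finset.mem_filter.mpr ⟨Finset.mem_univ _, ⟨x, hx, hi⟩⟩⟩
  have hBne : Bbar.Nonempty := by
    obtain ⟨x, hx⟩ := hB
    obtain ⟨i, hi⟩ := hcover B hBs x hx
    exact ⟨i, Finset.mem_filter.mpr ⟨Finset.mem_univ _, ⟨x, hx, hi⟩⟩⟩
  -- cells of the sumset are in the wrap of the thickening
  set D := Metric.cthickening (2 * h) (A + B) with hD
  have hkey : ∀ c ∈ Abar + Bbar,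
      Ico ((c.val:ℝ) * h) ((c.val:ℝ) * h + h) ⊆ wr17 P D := by
    intro c hc
    obtain ⟨i, hi, j, hj, rfl⟩ := Finset.mem_add.mp hc
    rw [hAbar, Finset.mem_filter] at hi
    rw [hBbar, Finset.mem_filter] at hj
    obtain ⟨α, hαA, hαc⟩ := hi.2
    obtain ⟨β, hβB, hβc⟩ := hj.2
    set s := i.val + j.val with hs
    have hvadd : (i + j).val = s % p := ZMod.val_add i j
    set e := s / p with he
    have hse : s % p + p * e = s := Nat.mod_add_div s p
    intro x hx
    have hcv : (i + j).val < p := ZMod.val_lt _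
    have hcast : ((i+j).val : ℝ) + (p:ℝ) * e = (s:ℝ) := by
      rw [hvadd]; exact_mod_cast hse
    rw [mem_wr17]
    obtain ⟨hα1, hα2⟩ := hαc
    obtain ⟨hβ1, hβ2⟩ := hβc
    obtain ⟨hx1, hx2⟩ := hx
    constructor
    · refine ⟨e, ?_⟩
      rw [hD]
      have hαβ : α + β ∈ A + B := add_mem_add hαA hβB
      apply Metric.mem_cthickening_of_dist_le (x + e * P) (α + β) _ _ hαβ
      rw [Real.dist_eq, abs_le]
      have hePcast : (e:ℝ) * P = (p:ℝ) * e * h := by rw [← hph]; ring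
      have hxe1 : (s:ℝ) * h ≤ x + e * P := by
        rw [hePcast]
        have heq : ((i+j).val : ℝ) * h + (p:ℝ) * e * h = (s:ℝ) * h := by
          rw [← hcast]; ring
        linarith
      have hxe2 : x + e * P < (s:ℝ) * h + h := by
        rw [hePcast]
        have heq : ((i+j).val : ℝ) * h + (p:ℝ) * e * h = (s:ℝ) * h := by
          rw [← hcast]; ring
        linarith
      have hab1 : (s:ℝ) * h ≤ α + β := by
        have : ((i.val:ℝ) + (j.val:ℝ)) * h = (s:ℝ) * h := by push_cast [hs]; ring
        nlinarith
      have hab2 : α + β ≤ (s:ℝ) * h + 2 * h := by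
        have : ((i.val:ℝ) + (j.val:ℝ)) * h = (s:ℝ) * h := by push_cast [hs]; ring
        nlinarith
      constructor <;> linarith
    · constructor
      · have : (0:ℝ) ≤ ((i+j).val : ℝ) * h := by positivity
        linarith
      · have h1 : ((i+j).val : ℝ) + 1 ≤ (p:ℝ) := by exact_mod_cast hcv
        have h2 : ((i+j).val : ℝ) * h + h ≤ (p:ℝ) * h := by nlinarith
        rw [hph] at h2
        linarith
  -- summing the disjoint cells
  have hsum : ((Abar + Bbar).card : ℝ≥0∞) * ENNReal.ofReal h ≤ volume (wr17 P D) := by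
    have hdisj : ((Abar + Bbar : Finset (ZMod p)) : Set (ZMod p)).PairwiseDisjoint
        (fun c : ZMod p => Ico ((c.val:ℝ) * h) ((c.val:ℝ) * h + h)) := by
      intro c _ c' _ hcc'
      exact Icodisj hh (fun hv => hcc' (ZMod.val_injective p hv))
    have huni : volume (⋃ c ∈ (Abar + Bbar : Finset (ZMod p)),
          Ico ((c.val:ℝ) * h) ((c.val:ℝ) * h + h))
        = ∑ c ∈ Abar + Bbar, volume (Ico ((c.val:ℝ) * h) ((c.val:ℝ) * h + h)) :=
      measure_biUnion_finset hdisj (fun c _ => measurableSet_Ico)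
    calc ((Abar + Bbar).card : ℝ≥0∞) * ENNReal.ofReal h
        = ∑ c ∈ Abar + Bbar, volume (Ico ((c.val:ℝ) * h) ((c.val:ℝ) * h + h)) := by
          rw [Finset.sum_congr rfl (fun c _ => by rw [Real.volume_Ico, add_sub_cancel_left]),
            Finset.sum_const, nsmul_eq_mul]
      _ = volume (⋃ c ∈ (Abar + Bbar : Finset (ZMod p)),
            Ico ((c.val:ℝ) * h) ((c.val:ℝ) * h + h)) := huni.symm
      _ ≤ volume (wr17 P D) := measure_mono (iUnion₂_subset hkey)
  -- Cauchy-Davenport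
  have hCD := ZMod.cauchy_davenport hp hAne hBne
  have hmin : min p (Abar.card + Bbar.card) ≤ (Abar + Bbar).card + 1 := by
    have h1 : 1 ≤ Abar.card := hAne.card_pos
    have h2 : 1 ≤ Bbar.card := hBne.card_pos
    omega
  have hPo : ENNReal.ofReal P = (p:ℝ≥0∞) * ENNReal.ofReal h := by
    rw [← hph, ENNReal.ofReal_mul (by positivity), ENNReal.ofReal_natCast]
  calc min (ENNReal.ofReal P) (volume A + volume B)
      ≤ ((min p (Abar.card + Bbar.card) : ℕ) : ℝ≥0∞) * ENNReal.ofReal h := by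
        rcases le_total p (Abar.card + Bbar.card) with hle | hle
        · rw [min_eq_left hle, ← hPo]; exact min_le_left _ _
        · rw [min_eq_right hle]
          refine le_trans (min_le_right _ _) ?_
          refine le_trans (add_le_add hAvol hBvol) ?_
          rw [← add_mul]; push_cast; exact le_rfl
    _ ≤ (((Abar + Bbar).card + 1 : ℕ) : ℝ≥0∞) * ENNReal.ofReal h := by
        apply mul_le_mul_left; exact_mod_cast hmin
    _ = ((Abar + Bbar).card : ℝ≥0∞) * ENNReal.ofReal h + ENNReal.ofReal h := by
        push_cast; ring
    _ ≤ volume (wr17 P D) + ENNReal.ofReal h := add_le_add_left hsum _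













/-- Raikov / Macbeath-type bound for compacts -/
lemma rai17 {P : ℝ} (hP : 0 < P) {A B : Set ℝ} (hA : A.Nonempty) (hB : B.Nonempty)
    (cA : IsCompact A) (cB : IsCompact B) (hAs : A ⊆ Icc 0 P) (hBs : B ⊆ Icc 0 P) :
    min (ENNReal.ofReal P) (volume A + volume B) ≤ volume (wr17 P (A + B)) := by
  classical
  set C := A + B with hC
  have cC : IsCompact C := cA.add cB
  have hCne : C.Nonempty := hA.add hB
  have hCsub : C ⊆ Icc 0 (2 * P) := by
    rintro z ⟨a, ha, b, hb, rfl⟩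
    obtain ⟨ha1, ha2⟩ := hAs ha; obtain ⟨hb1, hb2⟩ := hBs hb
    have : a + b ∈ Icc 0 (2 * P) := ⟨by linarith, by linarith⟩
    exact this
  set q : ℕ → ℕ := fun n => Nat.nth Nat.Prime n with hq
  have hqprime : ∀ n, (q n).Prime := fun n => Nat.prime_nth_prime n
  have hqmono : StrictMono q := Nat.nth_strictMono Nat.infinite_setOf_prime
  have hqge : ∀ n, n ≤ q n := fun n => hqmono.le_apply
  have hq2 : ∀ n, 2 ≤ q n := fun n => (hqprime n).two_le
  set δ : ℕ → ℝ := fun n => 2 * (P / q n) with hδ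
  have hδpos : ∀ n, 0 < δ n := fun n => by
    have : (0:ℝ) < q n := by exact_mod_cast (hqprime n).pos
    positivity
  have hδleP : ∀ n, δ n ≤ P := by
    intro n
    have h2 : (2:ℝ) ≤ q n := by exact_mod_cast hq2 n
    have h4 : (0:ℝ) < (q n : ℝ) := by linarith
    show 2 * (P / (q n : ℝ)) ≤ P
    have heq : 2 * (P / (q n:ℝ)) = 2 * P / (q n : ℝ) := by ring
    rw [heq, div_le_iff₀ h4]
    nlinarith
  have hδanti : Antitone δ := by
    intro m n hmn
    have h1 : (q m : ℝ) ≤ q n := by exact_mod_cast (hqmono.le_iff_le).mpr hmn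
    have h2 : (0:ℝ) < q m := by exact_mod_cast (hqprime m).pos
    have := div_le_div_of_nonneg_left hP.le h2 h1
    rw [hδ]
    simp only
    nlinarith [div_le_div_of_nonneg_left hP.le h2 h1]
  set F : ℕ → Set ℝ := fun n => wr17 P (Metric.cthickening (δ n) C) with hF
  have hFm : ∀ n, MeasurableSet (F n) := fun n =>
    wr17_meas (Metric.isClosed_cthickening).measurableSet
  have hFanti : Antitone F := fun m n hmn =>
    wr17_mono (Metric.cthickening_mono (hδanti hmn) C)
  have hFfin : volume (F 0) ≠ ∞ := by
    refine ne_of_lt (lt_of_le_of_lt (measure_mono (wr17_subset _ _)) ?_)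
    rw [Real.volume_Ico]; exact ENNReal.ofReal_lt_top
  have htend : Filter.Tendsto (fun n => volume (F n)) Filter.atTop
      (nhds (volume (⋂ n, F n))) :=
    tendsto_measure_iInter_atTop (fun n => (hFm n).nullMeasurableSet) hFanti ⟨0, hFfin⟩
  -- the intersection is inside wr17 P C
  have hsub : (⋂ n, F n) ⊆ wr17 P C := by
    intro x hx
    have hxmem : ∀ n, x ∈ F n := fun n => mem_iInter.mp hx n
    have hx0 : x ∈ Ico 0 P := wr17_subset _ _ (hxmem 0)
    -- uniform bound on k
    set K : ℕ := 4 + ⌈P⁻¹⌉₊ with hK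
    have hKbound : ∀ n (k : ℕ), x + k * P ∈ Metric.cthickening (δ n) C → k < K := by
      intro n k hk
      have hthick : Metric.cthickening (δ n) C ⊆ Metric.thickening (δ n + 1) C :=
        Metric.cthickening_subset_thickening' (by linarith [hδpos n]) (by linarith) C
      obtain ⟨c, hc, hdist⟩ := Metric.mem_thickening_iff.mp (hthick hk)
      have hc2 : c ≤ 2 * P := (hCsub hc).2
      have hzx : x + k * P ≤ c + (δ n + 1) := by
        have := abs_le.mp (le_of_lt (by rwa [Real.dist_eq] at hdist))
        linarith [this.1, this.2]
      have hkP : (k:ℝ) * P ≤ 3 * P + 1 := by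
        have := hδleP n
        have hx00 : (0:ℝ) ≤ x := hx0.1
        linarith
      by_contra hcon
      push_neg at hcon
      have hKk : (K:ℝ) ≤ (k:ℝ) := by exact_mod_cast hcon
      have hKP : (K:ℝ) * P ≥ 4 * P + 1 := by
        have h1 : (⌈P⁻¹⌉₊ : ℝ) ≥ P⁻¹ := Nat.le_ceil _
        have : (K:ℝ) = 4 + (⌈P⁻¹⌉₊:ℝ) := by rw [hK]; push_cast; ring
        rw [this, add_mul]
        have : (⌈P⁻¹⌉₊:ℝ) * P ≥ P⁻¹ * P := by nlinarith
        rw [inv_mul_cancel₀ hP.ne'] at this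
        linarith
      nlinarith
    -- selection function
    have hex : ∀ n, ∃ k : ℕ, k < K ∧ x + k * P ∈ Metric.cthickening (δ n) C := by
      intro n
      obtain ⟨⟨k, hk⟩, _⟩ := mem_wr17.mp (hxmem n)
      exact ⟨k, hKbound n k hk, hk⟩
    set f : ℕ → Fin K := fun n => ⟨Classical.choose (hex n),
      (Classical.choose_spec (hex n)).1⟩ with hfdef
    haveI : Nonempty (Fin K) := ⟨f 0⟩
    obtain ⟨k0, hk0⟩ := Finite.exists_infinite_fiber f
    have hk0inf : (f ⁻¹' {k0}).Infinite := Set.infinite_coe_iff.mp hk0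
    -- x + k0 * P belongs to every cthickening, hence to C
    have hmemC : x + (k0 : ℕ) * P ∈ C := by
      have hcl : closure C = ⋂ (ε : ℝ) (_ : 0 < ε), Metric.cthickening ε C :=
        Metric.closure_eq_iInter_cthickening C
      have : x + (k0 : ℕ) * P ∈ closure C := by
        rw [hcl]
        refine mem_iInter.mpr fun ε => mem_iInter.mpr fun hε => ?_
        obtain ⟨n, hnS, hn⟩ := hk0inf.exists_gt (⌈2 * P / ε⌉₊)
        have hfn : f n = k0 := hnS
        have hchoose := (Classical.choose_spec (hex n)).2
        have hval : (Classical.choose (hex n) : ℕ) = (k0 : ℕ) := by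
          have := congrArg (Fin.val) hfn
          simpa [hfdef] using this
        rw [hval] at hchoose
        refine Metric.cthickening_mono ?_ C hchoose
        -- δ n ≤ ε
        have h1 : (⌈2 * P / ε⌉₊ : ℝ) < n := by exact_mod_cast hn
        have h2 : 2 * P / ε ≤ (⌈2 * P / ε⌉₊ : ℝ) := Nat.le_ceil _
        have h3 : (n : ℝ) ≤ q n := by exact_mod_cast hqge n
        have h4 : (0:ℝ) < q n := by exact_mod_cast (hqprime n).pos
        have h5 : 2 * P / ε < (q n : ℝ) := by linarith
        show 2 * (P / (q n : ℝ)) ≤ ε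
        have heq : 2 * (P / (q n:ℝ)) = 2 * P / (q n : ℝ) := by ring
        rw [heq, div_le_iff₀ h4]
        rw [div_lt_iff₀ hε] at h5
        nlinarith
      rwa [cC.isClosed.closure_eq] at this
    exact mem_wr17.mpr ⟨⟨k0, hmemC⟩, hx0⟩
  -- pass to the limit
  have hbound : ∀ n, min (ENNReal.ofReal P) (volume A + volume B)
      ≤ volume (F n) + ENNReal.ofReal (P / q n) :=
    fun n => claim17 hP hA hB hAs hBs (q n) (hqprime n)
  have htend2 : Filter.Tendsto (fun n => ENNReal.ofReal (P / q n)) Filter.atTop (nhds 0) := by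
    rw [show (0:ℝ≥0∞) = ENNReal.ofReal 0 by simp]
    apply ENNReal.tendsto_ofReal
    have hq_at : Filter.Tendsto (fun n => (q n : ℝ)) Filter.atTop Filter.atTop :=
      Filter.Tendsto.comp tendsto_natCast_atTop_atTop (hqmono.tendsto_atTop)
    exact Filter.Tendsto.div_atTop tendsto_const_nhds hq_at
  have htend3 : Filter.Tendsto (fun n => volume (F n) + ENNReal.ofReal (P / q n))
      Filter.atTop (nhds (volume (⋂ n, F n) + 0)) := by
    exact Filter.Tendsto.add htend htend2
  have hfinal : min (ENNReal.ofReal P) (volume A + volume B)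
      ≤ volume (⋂ n, F n) + 0 :=
    ge_of_tendsto htend3 (Filter.Eventually.of_forall hbound)
  rw [add_zero] at hfinal
  exact le_trans hfinal (measure_mono hsub)














lemma fin17 {S : Set ℝ} {a b : ℝ} (h : S ⊆ Icc a b) : volume S ≠ ∞ :=
  ne_of_lt (lt_of_le_of_lt (measure_mono h) (by rw [Real.volume_Icc]; exact ENNReal.ofReal_lt_top))

/-- Lemma for statement (ii), compact version. -/
lemma cii17 {P : ℝ} (hP : 0 < P) {K L : Set ℝ} (cK : IsCompact K) (cL : IsCompact L)
    (hKne : K.Nonempty) (hKs : K ⊆ Icc 0 P) (hLs : L ⊆ Icc 0 P)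
    (hL0 : (0:ℝ) ∈ L) (hLP : P ∈ L) :
    min (ENNReal.ofReal P) (volume K + volume L) + volume K ≤ volume (K + L) := by
  set E := K + L with hE
  have cE : IsCompact E := cK.add cL
  have hEm : MeasurableSet E := cE.measurableSet
  have hEsub : E ⊆ Ico 0 ((2 + 1) * P) := by
    rintro z ⟨a, ha, b, hb, rfl⟩
    obtain ⟨ha1, ha2⟩ := hKs ha; obtain ⟨hb1, hb2⟩ := hLs hb
    have : a + b ∈ Ico 0 ((2+1) * P) := ⟨by linarith, by linarith⟩
    exact this
  have hovl := ovl17 hP 2 hEm hEsub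
  have hrai := rai17 hP hKne ⟨0, hL0⟩ cK cL hKs hLs
  have hover : K ∩ Ico 0 P ⊆ E ∩ (fun x => x + P) ⁻¹' E := by
    rintro x ⟨hxK, _⟩
    constructor
    · have := add_mem_add hxK hL0; simpa using this
    · have := add_mem_add hxK hLP; simpa using this
  have hKvol : volume (K ∩ Ico 0 P) = volume K := by
    have hsplit : volume (K ∩ Ico 0 P) + volume (K \ Ico 0 P) = volume K :=
      measure_inter_add_diff K measurableSet_Ico
    have hnull : volume (K \ Ico 0 P) = 0 := by
      have hsub2 : K \ Ico 0 P ⊆ {P} := by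
        rintro x ⟨hxK, hxn⟩
        obtain ⟨h1, h2⟩ := hKs hxK
        simp only [mem_Ico, not_and, not_lt] at hxn
        have : x = P := le_antisymm h2 (hxn h1)
        simp [this]
      exact measure_mono_null hsub2 Real.volume_singleton
    rw [← hsplit, hnull, add_zero]
  calc min (ENNReal.ofReal P) (volume K + volume L) + volume K
      = min (ENNReal.ofReal P) (volume K + volume L) + volume (K ∩ Ico 0 P) := by rw [hKvol]
    _ ≤ volume (wr17 P E) + volume (E ∩ (fun x => x + P) ⁻¹' E) :=
        add_le_add hrai (measure_mono hover)
    _ ≤ volume E := hovl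

/-- fiber counting lemma -/
lemma fib17 {P Q : ℝ} (hP : 0 < P) {L : Set ℝ} (hLs : L ⊆ Icc 0 Q) :
    ENNReal.ofReal P
      ≤ volume (wr17 P L) + volume (Icc 0 Q \ L) + ENNReal.ofReal (P - Q) := by
  classical
  have hcover : Ico 0 P ⊆ wr17 P L ∪ (Icc 0 Q \ L) ∪ Ico Q P := by
    intro θ hθ
    by_cases hw : θ ∈ wr17 P L
    · exact Or.inl (Or.inl hw)
    · have hθL : θ ∉ L := by
        intro hc
        exact hw (mem_wr17.mpr ⟨⟨0, by simpa using hc⟩, hθ⟩)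
      by_cases hq : θ ≤ Q
      · exact Or.inl (Or.inr ⟨⟨hθ.1, hq⟩, hθL⟩)
      · exact Or.inr ⟨le_of_not_ge hq, hθ.2⟩
  calc ENNReal.ofReal P = volume (Ico 0 P) := by rw [Real.volume_Ico, sub_zero]
    _ ≤ volume (wr17 P L ∪ (Icc 0 Q \ L) ∪ Ico Q P) := measure_mono hcover
    _ ≤ volume (wr17 P L ∪ (Icc 0 Q \ L)) + volume (Ico Q P) := measure_union_le _ _
    _ ≤ volume (wr17 P L) + volume (Icc 0 Q \ L) + volume (Ico Q P) :=
        add_le_add_left (measure_union_le _ _) _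
    _ = volume (wr17 P L) + volume (Icc 0 Q \ L) + ENNReal.ofReal (P - Q) := by
        rw [Real.volume_Ico]

/-- Lemma for statement (iii), compact version. -/
lemma ciii17 {P Q : ℝ} (hP : 0 < P) {K L : Set ℝ} (cK : IsCompact K) (cL : IsCompact L)
    (hLne : L.Nonempty) (hK0 : (0:ℝ) ∈ K) (hKP : P ∈ K) (hKs : K ⊆ Icc 0 P)
    (hLs : L ⊆ Icc 0 Q) (hQ : 0 ≤ Q) :
    min (ENNReal.ofReal P) (volume K + volume (wr17 P L)) + volume L ≤ volume (K + L) := by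
  classical
  set E := K + L with hE
  have cE : IsCompact E := cK.add cL
  have hEm : MeasurableSet E := cE.measurableSet
  set N : ℕ := ⌈(P + Q) / P⌉₊ with hN
  have hEsub : E ⊆ Ico 0 ((N + 1) * P) := by
    rintro z ⟨a, ha, b, hb, rfl⟩
    obtain ⟨ha1, ha2⟩ := hKs ha; obtain ⟨hb1, hb2⟩ := hLs hb
    have hNge : (P + Q) / P ≤ (N:ℝ) := Nat.le_ceil _
    have hN2 : P + Q ≤ (N:ℝ) * P := by
      rw [div_le_iff₀ hP] at hNge; linarith
    have : a + b ∈ Ico 0 (((N:ℝ) + 1) * P) := by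
      constructor
      · linarith
      · nlinarith
    exact this
  have hovl := ovl17 hP N hEm hEsub
  have hover : L ⊆ E ∩ (fun x => x + P) ⁻¹' E := by
    intro x hx
    constructor
    · have := add_mem_add hK0 hx; simpa using this
    · have := add_mem_add hKP hx
      simp only [mem_preimage]
      have heq : P + x = x + P := by ring
      rwa [heq] at this
  -- wrapped point of L
  obtain ⟨l, hl⟩ := hLne
  obtain ⟨hl1, hl2⟩ := hLs hl
  set k0 : ℕ := ⌊l / P⌋₊ with hk0
  set x0 : ℝ := l - k0 * P with hx0
  have hx0mem : x0 ∈ wr17 P L := by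
    have hf1 : (k0:ℝ) ≤ l / P := Nat.floor_le (by positivity)
    have hf2 : l / P < (k0:ℝ) + 1 := Nat.lt_floor_add_one _
    have h1 : (k0:ℝ) * P ≤ l := by
      have := mul_le_mul_of_nonneg_right hf1 hP.le
      rwa [div_mul_cancel₀ _ hP.ne'] at this
    have h2 : l < ((k0:ℝ) + 1) * P := by
      have := mul_lt_mul_of_pos_right hf2 hP
      rwa [div_mul_cancel₀ _ hP.ne'] at this
    refine mem_wr17.mpr ⟨⟨k0, ?_⟩, ⟨by simp [hx0]; linarith, by simp [hx0]; linarith⟩⟩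
    have : x0 + k0 * P = l := by rw [hx0]; ring
    rw [this]; exact hl
  have hwrm : MeasurableSet (wr17 P L) := wr17_meas cL.measurableSet
  have hwrfin : volume (wr17 P L) ≠ ∞ :=
    fin17 ((wr17_subset _ _).trans Ico_subset_Icc_self)
  -- epsilon argument
  have key : ∀ ε : ℝ≥0, 0 < ε →
      min (ENNReal.ofReal P) (volume K + volume (wr17 P L)) + volume L
        ≤ volume E + ε := by
    intro ε hε
    obtain ⟨B, hBsub, hBcomp, hBvol⟩ :=
      hwrm.exists_isCompact_lt_add hwrfin (ε := ε) (by exact_mod_cast hε.ne')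
    set B' : Set ℝ := B ∪ {x0} with hB'
    have hB'comp : IsCompact B' := hBcomp.union isCompact_singleton
    have hB'ne : B'.Nonempty := ⟨x0, Or.inr rfl⟩
    have hB'sub : B' ⊆ wr17 P L := by
      intro z hz
      rcases hz with hz | hz
      · exact hBsub hz
      · rw [mem_singleton_iff] at hz; subst hz; exact hx0mem
    have hB'Icc : B' ⊆ Icc 0 P := (hB'sub.trans (wr17_subset _ _)).trans Ico_subset_Icc_self
    have hrai := rai17 hP ⟨0, hK0⟩ hB'ne cK hB'comp hKs hB'Icc
    have hsub2 : wr17 P (K + B') ⊆ wr17 P E := by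
      intro x hx
      obtain ⟨⟨k, hk⟩, hxI⟩ := mem_wr17.mp hx
      obtain ⟨κ, hκ, β, hβ, heq⟩ := hk
      obtain ⟨⟨k2, hk2⟩, hβI⟩ := mem_wr17.mp (hB'sub hβ)
      refine mem_wr17.mpr ⟨⟨k + k2, ?_⟩, hxI⟩
      have heq2 : x + (↑(k + k2)) * P = κ + (β + k2 * P) := by
        push_cast
        have : κ + β = x + k * P := heq
        linarith [this]
      rw [heq2]
      exact add_mem_add hκ hk2
    have hBv : volume (wr17 P L) ≤ volume B' + ε := by
      refine le_trans hBvol.le (add_le_add_left (measure_mono subset_union_left) _)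
    calc min (ENNReal.ofReal P) (volume K + volume (wr17 P L)) + volume L
        ≤ min (ENNReal.ofReal P + ε) (volume K + volume B' + ε) + volume L := by
          refine add_le_add_left (min_le_min ?_ ?_) _
          · exact le_self_add
          · calc volume K + volume (wr17 P L) ≤ volume K + (volume B' + ε) :=
                add_le_add_right hBv _
              _ = volume K + volume B' + ε := by ring
      _ = min (ENNReal.ofReal P) (volume K + volume B') + ε + volume L := by
          rw [min_add_add_right]
      _ ≤ volume (wr17 P (K + B')) + ε + volume L := by
          exact add_le_add_left (add_le_add_left hrai _) _
      _ ≤ volume (wr17 P E) + ε + volume L :=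
          add_le_add_left (add_le_add_left (measure_mono hsub2) _) _
      _ = volume (wr17 P E) + volume L + ε := by ring
      _ ≤ volume (wr17 P E) + volume (E ∩ (fun x => x + P) ⁻¹' E) + ε :=
          add_le_add_left (add_le_add_right (measure_mono hover) _) _
      _ ≤ volume E + ε := add_le_add_left hovl _
  refine ENNReal.le_of_forall_pos_le_add fun ε hε _ => key ε hε







lemma tr17 (c : ℝ) (S : Set ℝ) : volume ((fun x => x + c) '' S) = volume S := by
  have himg : (fun x => x + c) '' S = (fun x => x + (-c)) ⁻¹' S := by
    ext z
    simp only [mem_image, mem_preimage]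
    constructor
    · rintro ⟨s, hs, rfl⟩; simpa using hs
    · intro hz; exact ⟨z + (-c), hz, by ring⟩
  rw [himg, measure_preimage_add_right]

lemma tr17sum (c d : ℝ) (S T : Set ℝ) :
    ((fun x => x + c) '' S) + ((fun x => x + d) '' T)
      = (fun x => x + (c + d)) '' (S + T) := by
  ext z
  constructor
  · rintro ⟨_, ⟨s, hs, rfl⟩, _, ⟨t, ht, rfl⟩, rfl⟩
    exact ⟨s + t, add_mem_add hs ht, by ring⟩
  · rintro ⟨_, ⟨s, hs, t, ht, rfl⟩, rfl⟩
    exact ⟨s + c, ⟨s, hs, rfl⟩, t + d, ⟨t, ht, rfl⟩, by ring⟩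

lemma trsub17 {T : Set ℝ} (S : Set ℝ) {c : ℝ} (hc : c ∈ T) :
    (fun x => x + c) '' S ⊆ S + T := by
  rintro z ⟨s, hs, rfl⟩
  exact ⟨s, hs, c, hc, rfl⟩

/-- the convex hull of a bounded nonempty set has volume `sSup - sInf`. -/
lemma hull17 {X : Set ℝ} (hne : X.Nonempty) (hb : Bornology.IsBounded X) :
    volume (convexHull ℝ X) = ENNReal.ofReal (sSup X - sInf X) := by
  apply le_antisymm
  · have hsub : convexHull ℝ X ⊆ Icc (sInf X) (sSup X) := by
      apply convexHull_min _ (convex_Icc _ _)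
      intro x hx
      exact ⟨csInf_le hb.bddBelow hx, le_csSup hb.bddAbove hx⟩
    calc volume (convexHull ℝ X) ≤ volume (Icc (sInf X) (sSup X)) := measure_mono hsub
      _ = ENNReal.ofReal (sSup X - sInf X) := Real.volume_Icc
  · have hsub : Ioo (sInf X) (sSup X) ⊆ convexHull ℝ X := by
      intro t ht
      obtain ⟨x1, hx1, hx1t⟩ := (csInf_lt_iff hb.bddBelow hne).mp ht.1
      obtain ⟨x2, hx2, hx2t⟩ := (lt_csSup_iff hb.bddAbove hne).mp ht.2
      have hseg : segment ℝ x1 x2 ⊆ convexHull ℝ X := segment_subset_convexHull hx1 hx2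
      apply hseg
      rw [segment_eq_Icc (by linarith : x1 ≤ x2)]
      exact ⟨hx1t.le, hx2t.le⟩
    calc ENNReal.ofReal (sSup X - sInf X) = volume (Ioo (sInf X) (sSup X)) :=
          Real.volume_Ioo.symm
      _ ≤ volume (convexHull ℝ X) := measure_mono hsub

lemma hullsplit17 {Y : Set ℝ} (hYm : MeasurableSet Y) :
    volume (convexHull ℝ Y) = volume Y + volume (convexHull ℝ Y \ Y) := by
  rw [← measure_inter_add_diff (convexHull ℝ Y) hYm,
    inter_eq_right.mpr (subset_convexHull ℝ Y)]

/-- Main inequality (ii) in ENNReal form. -/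
lemma main2 (X Y : Set ℝ) (hXne : X.Nonempty) (hYne : Y.Nonempty)
    (hXb : Bornology.IsBounded X) (hYb : Bornology.IsBounded Y)
    (hXm : MeasurableSet X) (hYm : MeasurableSet Y)
    (hab : sSup X - sInf X ≤ sSup Y - sInf Y) :
    volume X + volume (convexHull ℝ Y)
      ≤ volume (X + Y) + (volume (convexHull ℝ Y \ Y) - volume X) := by
  classical
  set iX := sInf X; set sX := sSup X; set a := sX - iX with ha
  set iY := sInf Y; set sY := sSup Y; set b := sY - iY with hb
  have hXsub : X ⊆ Icc iX sX := fun x hx => ⟨csInf_le hXb.bddBelow hx, le_csSup hXb.bddAbove hx⟩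
  have hYsub : Y ⊆ Icc iY sY := fun y hy => ⟨csInf_le hYb.bddBelow hy, le_csSup hYb.bddAbove hy⟩
  have hXfin : volume X ≠ ∞ := fin17 hXsub
  have hYfin : volume Y ≠ ∞ := fin17 hYsub
  have hcoY : volume (convexHull ℝ Y) = ENNReal.ofReal b := hull17 hYne hYb
  have hsplit : ENNReal.ofReal b = volume Y + volume (convexHull ℝ Y \ Y) := by
    rw [← hcoY]; exact hullsplit17 hYm
  by_cases hbpos : b ≤ 0
  · -- degenerate case
    have hb0 : ENNReal.ofReal b = 0 := ENNReal.ofReal_eq_zero.mpr hbpos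
    obtain ⟨y0, hy0⟩ := hYne
    have h1 : volume X ≤ volume (X + Y) := by
      rw [← tr17 y0 X]
      exact measure_mono (trsub17 X hy0)
    rw [hcoY, hb0, add_zero]
    exact le_trans h1 le_self_add
  push_neg at hbpos
  -- main case
  refine ENNReal.le_of_forall_pos_le_add fun ε hε hfin => ?_
  set δ : ℝ := min ((ε:ℝ)/8) (b/8) with hδ
  have hδpos : 0 < δ := by
    apply lt_min
    · have : (0:ℝ) < ε := hε
      linarith
    · linarith
  have hδb : δ ≤ b/8 := min_le_right _ _
  have hδε : 8 * δ ≤ ε := by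
    have := min_le_left ((ε:ℝ)/8) (b/8); rw [← hδ] at this; linarith
  -- pick points near extremes of Y
  obtain ⟨ym, hymY, hym⟩ := (csInf_lt_iff hYb.bddBelow hYne).mp
    (by linarith : sInf Y < iY + δ)
  obtain ⟨yp, hypY, hyp⟩ := (lt_csSup_iff hYb.bddAbove hYne).mp
    (by linarith : sY - δ < sSup Y)
  -- compact approximations
  obtain ⟨L0, hL0sub, hL0c, hL0v⟩ := hYm.exists_isCompact_lt_add hYfin
    (ε := ENNReal.ofReal δ) (by simp [hδpos.le]; exact hδpos)
  obtain ⟨K0, hK0sub, hK0c, hK0v⟩ := hXm.exists_isCompact_lt_add hXfin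
    (ε := ENNReal.ofReal δ) (by simp [hδpos.le]; exact hδpos)
  obtain ⟨x0, hx0X⟩ := hXne
  -- augmented compacts
  set L1 : Set ℝ := L0 ∪ ({ym} ∪ {yp}) with hL1
  have hL1c : IsCompact L1 := hL0c.union (isCompact_singleton.union isCompact_singleton)
  have hL1sub : L1 ⊆ Y := by
    intro z hz
    rcases hz with hz | hz | hz
    · exact hL0sub hz
    · rwa [mem_singleton_iff.mp hz]
    · rwa [mem_singleton_iff.mp hz]
  have hL1ne : L1.Nonempty := ⟨ym, Or.inr (Or.inl rfl)⟩
  set K1 : Set ℝ := K0 ∪ {x0} with hK1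
  have hK1c : IsCompact K1 := hK0c.union isCompact_singleton
  have hK1sub : K1 ⊆ X := by
    intro z hz
    rcases hz with hz | hz
    · exact hK0sub hz
    · rwa [mem_singleton_iff.mp hz]
  have hK1ne : K1.Nonempty := ⟨x0, Or.inr rfl⟩
  -- translate
  set mL := sInf L1 with hmL
  have hmLmem : mL ∈ L1 := hL1c.sInf_mem hL1ne
  set L : Set ℝ := (fun x => x + (-mL)) '' L1 with hLdef
  have hLc : IsCompact L := hL1c.image (continuous_add_right _)
  have hLne : L.Nonempty := hL1ne.image _
  set P := sSup L with hP
  have hL0mem : (0:ℝ) ∈ L := ⟨mL, hmLmem, by ring⟩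
  have hLPmem : P ∈ L := hLc.sSup_mem hLne
  have hLsub : L ⊆ Icc 0 P := by
    rintro z ⟨l, hl, rfl⟩
    constructor
    · show (0:ℝ) ≤ l + -mL
      have : mL ≤ l := csInf_le hL1c.bddBelow hl
      linarith
    · exact le_csSup hLc.bddAbove ⟨l, hl, rfl⟩
  have hPb : P ≤ b := by
    apply csSup_le hLne
    rintro z ⟨l, hl, rfl⟩
    show l + -mL ≤ b
    have h1 : l ≤ sY := le_csSup hYb.bddAbove (hL1sub hl)
    have h2 : iY ≤ mL := le_csInf hL1ne fun w hw => csInf_le hYb.bddBelow (hL1sub hw)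
    rw [hb]; linarith
  have hPlb : b - 2*δ ≤ P := by
    have h1 : mL ≤ ym := csInf_le hL1c.bddBelow (Or.inr (Or.inl rfl))
    have h2 : yp + (-mL) ∈ L := ⟨yp, Or.inr (Or.inr rfl), rfl⟩
    have h3 : yp + (-mL) ≤ P := le_csSup hLc.bddAbove h2
    rw [hb]; linarith
  have hPpos : 0 < P := by
    have : b/8 * 2 ≤ b/4 := by linarith
    nlinarith [hδb, hbpos]
  have hLvol : volume Y ≤ volume L + ENNReal.ofReal δ := by
    have h1 : volume L = volume L1 := tr17 _ _
    have h2 : volume L0 ≤ volume L1 := measure_mono subset_union_left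
    rw [h1]
    exact le_trans hL0v.le (add_le_add_left h2 _)
  -- K construction
  set mK := sInf K1 with hmK
  have hmKmem : mK ∈ K1 := hK1c.sInf_mem hK1ne
  set K' : Set ℝ := (fun x => x + (-mK)) '' K1 with hK'def
  have hK'c : IsCompact K' := hK1c.image (continuous_add_right _)
  set K : Set ℝ := K' ∩ Icc 0 P with hKdef
  have hKc : IsCompact K := hK'c.inter_right isClosed_Icc
  have hKne2 : K.Nonempty := by
    refine ⟨0, ⟨mK, hmKmem, by ring⟩, ⟨le_refl 0, hPpos.le⟩⟩
  have hKs : K ⊆ Icc 0 P := inter_subset_right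
  have hK'sub : K' ⊆ Icc 0 a := by
    rintro z ⟨k, hk, rfl⟩
    constructor
    · show (0:ℝ) ≤ k + -mK
      have : mK ≤ k := csInf_le hK1c.bddBelow hk
      linarith
    · show k + -mK ≤ a
      have h1 : k ≤ sX := le_csSup hXb.bddAbove (hK1sub hk)
      have h2 : iX ≤ mK := le_csInf hK1ne fun w hw => csInf_le hXb.bddBelow (hK1sub hw)
      rw [ha]; linarith
  have hKvol : volume X ≤ volume K + ENNReal.ofReal δ + ENNReal.ofReal (2*δ) := by
    have h1 : volume K' = volume K1 := tr17 _ _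
    have h2 : volume K0 ≤ volume K1 := measure_mono subset_union_left
    have h3 : volume X ≤ volume K' + ENNReal.ofReal δ := by
      rw [h1]; exact le_trans hK0v.le (add_le_add_left h2 _)
    have h4 : volume (K' ∩ Icc 0 P) + volume (K' \ Icc 0 P) = volume K' :=
      measure_inter_add_diff K' measurableSet_Icc
    have h5 : K' \ Icc 0 P ⊆ Icc P a := by
      rintro z ⟨hz1, hz2⟩
      obtain ⟨hz3, hz4⟩ := hK'sub hz1
      simp only [mem_Icc, not_and, not_le] at hz2
      exact ⟨(hz2 hz3).le, hz4⟩
    have h6 : volume (K' \ Icc 0 P) ≤ ENNReal.ofReal (2*δ) := by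
      calc volume (K' \ Icc 0 P) ≤ volume (Icc P a) := measure_mono h5
        _ = ENNReal.ofReal (a - P) := Real.volume_Icc
        _ ≤ ENNReal.ofReal (2*δ) := ENNReal.ofReal_le_ofReal (by linarith)
    calc volume X ≤ volume K' + ENNReal.ofReal δ := h3
      _ = volume K + volume (K' \ Icc 0 P) + ENNReal.ofReal δ := by rw [← h4]
      _ ≤ volume K + ENNReal.ofReal (2*δ) + ENNReal.ofReal δ := by
          exact add_le_add_left (add_le_add_right h6 _) _
      _ = volume K + ENNReal.ofReal δ + ENNReal.ofReal (2*δ) := by ring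
  -- the sumset
  have hKLsub : volume (K + L) ≤ volume (X + Y) := by
    have h1 : K + L ⊆ ((fun x => x + (-mK)) '' X) + ((fun x => x + (-mL)) '' Y) := by
      apply Set.add_subset_add
      · exact inter_subset_left.trans (image_mono hK1sub)
      · exact image_mono hL1sub
    rw [tr17sum] at h1
    calc volume (K + L) ≤ volume ((fun x => x + (-mK + -mL)) '' (X + Y)) := measure_mono h1
      _ = volume (X + Y) := tr17 _ _
  have hcii := cii17 hPpos hKc hLc hKne2 hKs hLsub hL0mem hLPmem
  have hchain : min (ENNReal.ofReal P) (volume K + volume L) + volume K ≤ volume (X + Y) :=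
    le_trans hcii hKLsub
  -- conclude
  set G := volume (convexHull ℝ Y \ Y) with hG
  set VX := volume X with hVX
  have hKfin : volume K ≠ ∞ := fin17 hKs
  have hLfin : volume L ≠ ∞ := fin17 hLsub
  rw [hcoY]
  rcases le_total (ENNReal.ofReal P) (volume K + volume L) with hmin | hmin
  · -- min = ofReal P
    rw [min_eq_left hmin] at hchain
    have h1 : ENNReal.ofReal b ≤ ENNReal.ofReal P + ENNReal.ofReal (2*δ) := by
      rw [← ENNReal.ofReal_add hPpos.le (by linarith)]
      exact ENNReal.ofReal_le_ofReal (by linarith)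
    calc VX + ENNReal.ofReal b
        ≤ (volume K + ENNReal.ofReal δ + ENNReal.ofReal (2*δ))
          + (ENNReal.ofReal P + ENNReal.ofReal (2*δ)) := add_le_add hKvol h1
      _ = (ENNReal.ofReal P + volume K)
          + (ENNReal.ofReal δ + ENNReal.ofReal (2*δ) + ENNReal.ofReal (2*δ)) := by ring
      _ ≤ volume (X + Y) + ENNReal.ofReal (5*δ) := by
          apply add_le_add hchain
          rw [← ENNReal.ofReal_add (by linarith) (by linarith),
            ← ENNReal.ofReal_add (by linarith) (by linarith)]
          exact ENNReal.ofReal_le_ofReal (by linarith)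
      _ ≤ volume (X + Y) + (G - VX) + ε := by
          rw [add_assoc]
          apply add_le_add_right
          calc ENNReal.ofReal (5*δ) ≤ ENNReal.ofReal (ε:ℝ) :=
                ENNReal.ofReal_le_ofReal (by linarith)
            _ = (ε : ℝ≥0∞) := ENNReal.ofReal_coe_nnreal
            _ ≤ (G - VX) + ε := le_add_self
  · -- min = volume K + volume L
    rw [min_eq_right hmin] at hchain
    have hGle : G ≤ volume K + ENNReal.ofReal (3*δ) + (G - VX) := by
      calc G ≤ VX + (G - VX) := le_add_tsub
        _ ≤ (volume K + ENNReal.ofReal δ + ENNReal.ofReal (2*δ)) + (G - VX) :=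
            add_le_add_left hKvol _
        _ = volume K + (ENNReal.ofReal δ + ENNReal.ofReal (2*δ)) + (G - VX) := by ring
        _ = volume K + ENNReal.ofReal (3*δ) + (G - VX) := by
            rw [← ENNReal.ofReal_add (by linarith) (by linarith)]
            congr 1; ring
    calc VX + ENNReal.ofReal b
        = VX + (volume Y + G) := by rw [hsplit]
      _ ≤ (volume K + ENNReal.ofReal δ + ENNReal.ofReal (2*δ))
          + ((volume L + ENNReal.ofReal δ) + G) := by
          exact add_le_add hKvol (add_le_add_left hLvol _)
      _ = (volume K + volume L) + G
          + (ENNReal.ofReal δ + ENNReal.ofReal (2*δ) + ENNReal.ofReal δ) := by ring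
      _ ≤ (volume K + volume L) + (volume K + ENNReal.ofReal (3*δ) + (G - VX))
          + (ENNReal.ofReal δ + ENNReal.ofReal (2*δ) + ENNReal.ofReal δ) := by
          exact add_le_add_left (add_le_add_right hGle _) _
      _ = ((volume K + volume L) + volume K) + (G - VX)
          + (ENNReal.ofReal (3*δ) + (ENNReal.ofReal δ + ENNReal.ofReal (2*δ)
            + ENNReal.ofReal δ)) := by ring
      _ ≤ volume (X + Y) + (G - VX) + ε := by
          apply add_le_add (add_le_add_left hchain _)
          rw [← ENNReal.ofReal_add (by linarith) (by linarith),
            ← ENNReal.ofReal_add (by linarith) (by linarith),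
            ← ENNReal.ofReal_add (by linarith) (by linarith)]
          calc ENNReal.ofReal (3*δ + (δ + 2*δ + δ)) ≤ ENNReal.ofReal (ε:ℝ) :=
                ENNReal.ofReal_le_ofReal (by linarith)
            _ = (ε : ℝ≥0∞) := ENNReal.ofReal_coe_nnreal






















/-- Main inequality (iii) in ENNReal form. -/
lemma main3 (X Y : Set ℝ) (hXne : X.Nonempty) (hYne : Y.Nonempty)
    (hXb : Bornology.IsBounded X) (hYb : Bornology.IsBounded Y)
    (hXm : MeasurableSet X) (hYm : MeasurableSet Y)
    (hab : sSup X - sInf X ≤ sSup Y - sInf Y) :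
    volume (convexHull ℝ X) + volume Y
      ≤ volume (X + Y) + (volume (convexHull ℝ Y \ Y) - volume X) := by
  classical
  set iX := sInf X; set sX := sSup X; set a := sX - iX with ha
  set iY := sInf Y; set sY := sSup Y; set b := sY - iY with hb
  have hXsub : X ⊆ Icc iX sX := fun x hx => ⟨csInf_le hXb.bddBelow hx, le_csSup hXb.bddAbove hx⟩
  have hYsub : Y ⊆ Icc iY sY := fun y hy => ⟨csInf_le hYb.bddBelow hy, le_csSup hYb.bddAbove hy⟩
  have hXfin : volume X ≠ ∞ := fin17 hXsub
  have hYfin : volume Y ≠ ∞ := fin17 hYsub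
  have hcoX : volume (convexHull ℝ X) = ENNReal.ofReal a := hull17 hXne hXb
  have hcoY : volume (convexHull ℝ Y) = ENNReal.ofReal b := hull17 hYne hYb
  have hsplit : ENNReal.ofReal b = volume Y + volume (convexHull ℝ Y \ Y) := by
    rw [← hcoY]; exact hullsplit17 hYm
  by_cases hapos : a ≤ 0
  · -- degenerate case
    have ha0 : ENNReal.ofReal a = 0 := ENNReal.ofReal_eq_zero.mpr hapos
    obtain ⟨x0, hx0⟩ := hXne
    have h1 : volume Y ≤ volume (X + Y) := by
      rw [← tr17 x0 Y]
      refine measure_mono ((trsub17 Y hx0).trans ?_)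
      rw [add_comm Y X]
    rw [hcoX, ha0, zero_add]
    exact le_trans h1 le_self_add
  push_neg at hapos
  refine ENNReal.le_of_forall_pos_le_add fun ε hε hfin => ?_
  set δ : ℝ := min ((ε:ℝ)/8) (a/8) with hδ
  have hδpos : 0 < δ := by
    apply lt_min
    · have : (0:ℝ) < ε := hε
      linarith
    · linarith
  have hδa : δ ≤ a/8 := min_le_right _ _
  have hδε : 8 * δ ≤ ε := by
    have := min_le_left ((ε:ℝ)/8) (a/8); rw [← hδ] at this; linarith
  -- pick points near extremes
  obtain ⟨xm, hxmX, hxm⟩ := (csInf_lt_iff hXb.bddBelow hXne).mp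
    (by linarith : sInf X < iX + δ)
  obtain ⟨xp, hxpX, hxp⟩ := (lt_csSup_iff hXb.bddAbove hXne).mp
    (by linarith : sX - δ < sSup X)
  obtain ⟨ym, hymY, hym⟩ := (csInf_lt_iff hYb.bddBelow hYne).mp
    (by linarith : sInf Y < iY + δ)
  obtain ⟨yp, hypY, hyp⟩ := (lt_csSup_iff hYb.bddAbove hYne).mp
    (by linarith : sY - δ < sSup Y)
  obtain ⟨L0, hL0sub, hL0c, hL0v⟩ := hYm.exists_isCompact_lt_add hYfin
    (ε := ENNReal.ofReal δ) (by simp [hδpos.le]; exact hδpos)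
  obtain ⟨K0, hK0sub, hK0c, hK0v⟩ := hXm.exists_isCompact_lt_add hXfin
    (ε := ENNReal.ofReal δ) (by simp [hδpos.le]; exact hδpos)
  -- K construction: keep endpoints
  set K1 : Set ℝ := K0 ∪ ({xm} ∪ {xp}) with hK1
  have hK1c : IsCompact K1 := hK0c.union (isCompact_singleton.union isCompact_singleton)
  have hK1sub : K1 ⊆ X := by
    intro z hz
    rcases hz with hz | hz | hz
    · exact hK0sub hz
    · rwa [mem_singleton_iff.mp hz]
    · rwa [mem_singleton_iff.mp hz]
  have hK1ne : K1.Nonempty := ⟨xm, Or.inr (Or.inl rfl)⟩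
  set mK := sInf K1 with hmK
  have hmKmem : mK ∈ K1 := hK1c.sInf_mem hK1ne
  set K : Set ℝ := (fun x => x + (-mK)) '' K1 with hKdef
  have hKc : IsCompact K := hK1c.image (continuous_add_right _)
  have hKne : K.Nonempty := hK1ne.image _
  set P := sSup K with hP
  have hK0mem : (0:ℝ) ∈ K := ⟨mK, hmKmem, by ring⟩
  have hKPmem : P ∈ K := hKc.sSup_mem hKne
  have hKs : K ⊆ Icc 0 P := by
    rintro z ⟨k, hk, rfl⟩
    constructor
    · show (0:ℝ) ≤ k + -mK
      have : mK ≤ k := csInf_le hK1c.bddBelow hk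
      linarith
    · exact le_csSup hKc.bddAbove ⟨k, hk, rfl⟩
  have hPa : P ≤ a := by
    apply csSup_le hKne
    rintro z ⟨k, hk, rfl⟩
    show k + -mK ≤ a
    have h1 : k ≤ sX := le_csSup hXb.bddAbove (hK1sub hk)
    have h2 : iX ≤ mK := le_csInf hK1ne fun w hw => csInf_le hXb.bddBelow (hK1sub hw)
    rw [ha]; linarith
  have hPlb : a - 2*δ ≤ P := by
    have h1 : mK ≤ xm := csInf_le hK1c.bddBelow (Or.inr (Or.inl rfl))
    have h2 : xp + (-mK) ∈ K := ⟨xp, Or.inr (Or.inr rfl), rfl⟩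
    have h3 : xp + (-mK) ≤ P := le_csSup hKc.bddAbove h2
    rw [ha]; linarith
  have hPpos : 0 < P := by nlinarith [hδa, hapos]
  have hKvol : volume X ≤ volume K + ENNReal.ofReal δ := by
    have h1 : volume K = volume K1 := tr17 _ _
    have h2 : volume K0 ≤ volume K1 := measure_mono subset_union_left
    rw [h1]
    exact le_trans hK0v.le (add_le_add_left h2 _)
  -- L construction
  set L1 : Set ℝ := L0 ∪ ({ym} ∪ {yp}) with hL1
  have hL1c : IsCompact L1 := hL0c.union (isCompact_singleton.union isCompact_singleton)
  have hL1sub : L1 ⊆ Y := by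
    intro z hz
    rcases hz with hz | hz | hz
    · exact hL0sub hz
    · rwa [mem_singleton_iff.mp hz]
    · rwa [mem_singleton_iff.mp hz]
  have hL1ne : L1.Nonempty := ⟨ym, Or.inr (Or.inl rfl)⟩
  set mL := sInf L1 with hmL
  have hmLmem : mL ∈ L1 := hL1c.sInf_mem hL1ne
  set L : Set ℝ := (fun x => x + (-mL)) '' L1 with hLdef
  have hLc : IsCompact L := hL1c.image (continuous_add_right _)
  have hLne : L.Nonempty := hL1ne.image _
  set Q := sSup L with hQ
  have hLsub : L ⊆ Icc 0 Q := by
    rintro z ⟨l, hl, rfl⟩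
    constructor
    · show (0:ℝ) ≤ l + -mL
      have : mL ≤ l := csInf_le hL1c.bddBelow hl
      linarith
    · exact le_csSup hLc.bddAbove ⟨l, hl, rfl⟩
  have hQb : Q ≤ b := by
    apply csSup_le hLne
    rintro z ⟨l, hl, rfl⟩
    show l + -mL ≤ b
    have h1 : l ≤ sY := le_csSup hYb.bddAbove (hL1sub hl)
    have h2 : iY ≤ mL := le_csInf hL1ne fun w hw => csInf_le hYb.bddBelow (hL1sub hw)
    rw [hb]; linarith
  have hQlb : b - 2*δ ≤ Q := by
    have h1 : mL ≤ ym := csInf_le hL1c.bddBelow (Or.inr (Or.inl rfl))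
    have h2 : yp + (-mL) ∈ L := ⟨yp, Or.inr (Or.inr rfl), rfl⟩
    have h3 : yp + (-mL) ≤ Q := le_csSup hLc.bddAbove h2
    rw [hb]; linarith
  have hQ0 : 0 ≤ Q := by nlinarith [hδa, hapos, hab]
  have hLvol : volume Y ≤ volume L + ENNReal.ofReal δ := by
    have h1 : volume L = volume L1 := tr17 _ _
    have h2 : volume L0 ≤ volume L1 := measure_mono subset_union_left
    rw [h1]
    exact le_trans hL0v.le (add_le_add_left h2 _)
  have hLfin : volume L ≠ ∞ := fin17 hLsub
  -- apply the compact lemmas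
  have hciii := ciii17 hPpos hKc hLc hLne hK0mem hKPmem hKs hLsub hQ0
  have hKLsub : volume (K + L) ≤ volume (X + Y) := by
    have h1 : K + L ⊆ ((fun x => x + (-mK)) '' X) + ((fun x => x + (-mL)) '' Y) := by
      apply Set.add_subset_add
      · exact image_mono hK1sub
      · exact image_mono hL1sub
    have h2 : ((fun x => x + (-mK)) '' X) + ((fun x => x + (-mL)) '' Y)
        = (fun x => x + (-mK + -mL)) '' (X + Y) := tr17sum _ _ _ _
    calc volume (K + L)
        ≤ volume (((fun x => x + (-mK)) '' X) + ((fun x => x + (-mL)) '' Y)) :=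
          measure_mono h1
      _ = volume ((fun x => x + (-mK + -mL)) '' (X + Y)) := by rw [h2]
      _ = volume (X + Y) := tr17 _ _
  have hchain : min (ENNReal.ofReal P) (volume K + volume (wr17 P L)) + volume L
      ≤ volume (X + Y) := le_trans hciii hKLsub
  have hfib := fib17 (Q := Q) hPpos hLsub
  set G := volume (convexHull ℝ Y \ Y) with hG
  set VX := volume X with hVX
  have hPQ : ENNReal.ofReal (P - Q) ≤ ENNReal.ofReal (2*δ) :=
    ENNReal.ofReal_le_ofReal (by linarith)
  have hGL : volume (Icc 0 Q \ L) ≤ G + ENNReal.ofReal δ := by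
    have e1 : volume (Icc 0 Q ∩ L) + volume (Icc 0 Q \ L) = volume (Icc 0 Q) :=
      measure_inter_add_diff _ hLc.measurableSet
    rw [inter_eq_right.mpr hLsub] at e1
    have e2 : volume (Icc 0 Q) = ENNReal.ofReal Q := by rw [Real.volume_Icc, sub_zero]
    have e3 : volume L + volume (Icc 0 Q \ L) ≤ (G + ENNReal.ofReal δ) + volume L := by
      rw [e1, e2]
      calc ENNReal.ofReal Q ≤ ENNReal.ofReal b := ENNReal.ofReal_le_ofReal (by linarith)
        _ = volume Y + G := hsplit
        _ ≤ (volume L + ENNReal.ofReal δ) + G := add_le_add_left hLvol _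
        _ = (G + ENNReal.ofReal δ) + volume L := by ring
    have e4 : volume (Icc 0 Q \ L) + volume L ≤ (G + ENNReal.ofReal δ) + volume L := by
      calc volume (Icc 0 Q \ L) + volume L = volume L + volume (Icc 0 Q \ L) := add_comm _ _
        _ ≤ (G + ENNReal.ofReal δ) + volume L := e3
    exact ENNReal.le_of_add_le_add_right hLfin e4
  have haP : ENNReal.ofReal a ≤ ENNReal.ofReal P + ENNReal.ofReal (2*δ) := by
    rw [← ENNReal.ofReal_add hPpos.le (by linarith)]
    exact ENNReal.ofReal_le_ofReal (by linarith)
  rw [hcoX]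
  rcases le_total (ENNReal.ofReal P) (volume K + volume (wr17 P L)) with hmin | hmin
  · -- min = ofReal P
    rw [min_eq_left hmin] at hchain
    calc ENNReal.ofReal a + volume Y
        ≤ (ENNReal.ofReal P + ENNReal.ofReal (2*δ))
          + (volume L + ENNReal.ofReal δ) := add_le_add haP hLvol
      _ = (ENNReal.ofReal P + volume L) + (ENNReal.ofReal (2*δ) + ENNReal.ofReal δ) := by
          ring
      _ ≤ volume (X + Y) + ENNReal.ofReal (3*δ) := by
          apply add_le_add hchain
          rw [← ENNReal.ofReal_add (by linarith) (by linarith)]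
          exact ENNReal.ofReal_le_ofReal (by linarith)
      _ ≤ volume (X + Y) + (G - VX) + ε := by
          rw [add_assoc]
          apply add_le_add_right
          calc ENNReal.ofReal (3*δ) ≤ ENNReal.ofReal (ε:ℝ) :=
                ENNReal.ofReal_le_ofReal (by linarith)
            _ = (ε : ℝ≥0∞) := ENNReal.ofReal_coe_nnreal
            _ ≤ (G - VX) + ε := le_add_self
  · -- min = volume K + volume (wr17 P L)
    rw [min_eq_right hmin] at hchain
    have hGmid : G ≤ VX + (G - VX) := le_add_tsub
    calc ENNReal.ofReal a + volume Y
        ≤ (ENNReal.ofReal P + ENNReal.ofReal (2*δ)) + (volume L + ENNReal.ofReal δ) :=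
          add_le_add haP hLvol
      _ ≤ ((volume (wr17 P L) + volume (Icc 0 Q \ L) + ENNReal.ofReal (P - Q))
            + ENNReal.ofReal (2*δ)) + (volume L + ENNReal.ofReal δ) := by
          exact add_le_add_left (add_le_add_left hfib _) _
      _ ≤ ((volume (wr17 P L) + (G + ENNReal.ofReal δ) + ENNReal.ofReal (2*δ))
            + ENNReal.ofReal (2*δ)) + (volume L + ENNReal.ofReal δ) := by
          refine add_le_add_left (add_le_add_left (add_le_add (add_le_add_right hGL _) hPQ) _) _
      _ = volume (wr17 P L) + volume L + G
          + (ENNReal.ofReal δ + ENNReal.ofReal (2*δ) + ENNReal.ofReal (2*δ)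
            + ENNReal.ofReal δ) := by ring
      _ ≤ volume (wr17 P L) + volume L + (VX + (G - VX))
          + (ENNReal.ofReal δ + ENNReal.ofReal (2*δ) + ENNReal.ofReal (2*δ)
            + ENNReal.ofReal δ) := by
          exact add_le_add_left (add_le_add_right hGmid _) _
      _ ≤ volume (wr17 P L) + volume L + ((volume K + ENNReal.ofReal δ) + (G - VX))
          + (ENNReal.ofReal δ + ENNReal.ofReal (2*δ) + ENNReal.ofReal (2*δ)
            + ENNReal.ofReal δ) := by
          exact add_le_add_left (add_le_add_right (add_le_add_left hKvol _) _) _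
      _ = (volume K + volume (wr17 P L) + volume L) + (G - VX)
          + (ENNReal.ofReal δ + (ENNReal.ofReal δ + ENNReal.ofReal (2*δ)
            + ENNReal.ofReal (2*δ) + ENNReal.ofReal δ)) := by ring
      _ ≤ volume (X + Y) + (G - VX) + ε := by
          apply add_le_add (add_le_add_left hchain _)
          rw [← ENNReal.ofReal_add (by linarith) (by linarith),
            ← ENNReal.ofReal_add (by linarith) (by linarith),
            ← ENNReal.ofReal_add (by linarith) (by linarith),
            ← ENNReal.ofReal_add (by linarith) (by linarith)]
          calc ENNReal.ofReal (δ + (δ + 2*δ + 2*δ + δ)) ≤ ENNReal.ofReal (ε:ℝ) :=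
                ENNReal.ofReal_le_ofReal (by linarith)
            _ = (ε : ℝ≥0∞) := ENNReal.ofReal_coe_nnreal


end Stmt17Aux

open Set Pointwise MeasureTheory
open scoped ENNReal NNReal











theorem stmt_17 (X Y : Set ℝ) (hXne : X.Nonempty) (hYne : Y.Nonempty)
    (hXb : Bornology.IsBounded X) (hYb : Bornology.IsBounded Y)
    (hXm : MeasurableSet X) (hYm : MeasurableSet Y)
    (h : volume (convexHull ℝ X) ≤ volume (convexHull ℝ Y)) :
    2 * (volume X).toReal ≤ (volume (X + Y)).toReal ∧
    (volume X).toReal + (volume (convexHull ℝ Y)).toReal +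
        min 0 ((volume X).toReal - (volume (convexHull ℝ Y \ Y)).toReal)
      ≤ (volume (X + Y)).toReal ∧
    (volume (convexHull ℝ X)).toReal + (volume Y).toReal +
        min 0 ((volume X).toReal - (volume (convexHull ℝ Y \ Y)).toReal)
      ≤ (volume (X + Y)).toReal := by
  have hXsub : X ⊆ Icc (sInf X) (sSup X) :=
    fun x hx => ⟨csInf_le hXb.bddBelow hx, le_csSup hXb.bddAbove hx⟩
  have hYsub : Y ⊆ Icc (sInf Y) (sSup Y) :=
    fun y hy => ⟨csInf_le hYb.bddBelow hy, le_csSup hYb.bddAbove hy⟩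
  have hXfin : volume X ≠ ∞ := fin17 hXsub
  have hYfin : volume Y ≠ ∞ := fin17 hYsub
  have hcoXfin : volume (convexHull ℝ X) ≠ ∞ := by
    rw [hull17 hXne hXb]; exact ENNReal.ofReal_ne_top
  have hcoYfin : volume (convexHull ℝ Y) ≠ ∞ := by
    rw [hull17 hYne hYb]; exact ENNReal.ofReal_ne_top
  have hGfin : volume (convexHull ℝ Y \ Y) ≠ ∞ :=
    fun hc => hcoYfin (eq_top_iff.mpr (le_trans (le_of_eq hc.symm)
      (measure_mono diff_subset)))
  have hEfin : volume (X + Y) ≠ ∞ := by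
    apply fin17 (a := sInf X + sInf Y) (b := sSup X + sSup Y)
    rintro z ⟨x, hx, y, hy, rfl⟩
    obtain ⟨h1, h2⟩ := hXsub hx
    obtain ⟨h3, h4⟩ := hYsub hy
    have : x + y ∈ Icc (sInf X + sInf Y) (sSup X + sSup Y) := ⟨by linarith, by linarith⟩
    exact this
  -- hull comparison in the reals
  have hab : sSup X - sInf X ≤ sSup Y - sInf Y := by
    rw [hull17 hXne hXb, hull17 hYne hYb] at h
    have hYnn : 0 ≤ sSup Y - sInf Y := by
      have := csInf_le_csSup hYne hYb.bddBelow hYb.bddAbove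
      linarith
    rcases le_total (sSup X - sInf X) 0 with hc | hc
    · linarith
    · exact (ENNReal.ofReal_le_ofReal_iff hYnn).mp h
  have E2 := main2 X Y hXne hYne hXb hYb hXm hYm hab
  have E3 := main3 X Y hXne hYne hXb hYb hXm hYm hab
  set G' := volume (convexHull ℝ Y \ Y) with hG'
  have hsubfin : G' - volume X ≠ ∞ := ne_top_of_le_ne_top hGfin tsub_le_self
  set x := (volume X).toReal with hx
  set y := (volume Y).toReal with hy
  set cx := (volume (convexHull ℝ X)).toReal with hcx
  set cy := (volume (convexHull ℝ Y)).toReal with hcy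
  set g := G'.toReal with hg
  set e := (volume (X + Y)).toReal with he
  set t := (G' - volume X).toReal with ht
  have R2 : x + cy ≤ e + t := by
    have h1 := ENNReal.toReal_mono (by
      exact ENNReal.add_ne_top.mpr ⟨hEfin, hsubfin⟩) E2
    rwa [ENNReal.toReal_add hXfin hcoYfin, ENNReal.toReal_add hEfin hsubfin] at h1
  have R3 : cx + y ≤ e + t := by
    have h1 := ENNReal.toReal_mono (by
      exact ENNReal.add_ne_top.mpr ⟨hEfin, hsubfin⟩) E3
    rwa [ENNReal.toReal_add hcoXfin hYfin, ENNReal.toReal_add hEfin hsubfin] at h1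
  have hcysplit : cy = y + g := by
    rw [hcy, hullsplit17 hYm, ENNReal.toReal_add hYfin hGfin]
  have hxcx : x ≤ cx :=
    ENNReal.toReal_mono hcoXfin (measure_mono (subset_convexHull ℝ X))
  have hcxcy : cx ≤ cy := ENNReal.toReal_mono hcoYfin h
  have hynn : 0 ≤ y := ENNReal.toReal_nonneg
  have hxnn : 0 ≤ x := ENNReal.toReal_nonneg
  rcases le_total G' (volume X) with hc | hc
  · -- g ≤ x, t = 0
    have ht0 : t = 0 := by rw [ht, tsub_eq_zero_of_le hc]; simp
    have hgx : g ≤ x := ENNReal.toReal_mono hXfin hc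
    have hmin : min 0 (x - g) = 0 := min_eq_left (by linarith)
    rw [ht0] at R2 R3
    refine ⟨by linarith, by rw [hmin]; linarith, by rw [hmin]; linarith⟩
  · -- x ≤ g, t = g - x
    have ht1 : t = g - x := by
      rw [ht, ENNReal.toReal_sub_of_le hc hGfin]
    have hxg : x ≤ g := ENNReal.toReal_mono hGfin hc
    have hmin : min 0 (x - g) = x - g := min_eq_right (by linarith)
    rw [ht1] at R2 R3
    refine ⟨by linarith, by rw [hmin]; linarith, by rw [hmin]; linarith⟩
end
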